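/- If g is a finite-dimensional semisimple Lie algebra over an algebraically closed field of characteristic 0 and e ∈ g satisfies e ∈ [g_e, g_e], where g_e is the centralizer of e in g, then e is nilpotent (i.e., ad e is a nilpotent endomorphism). -/

import Mathlib

section Defs

variable (K : Type*) (L : Type*) [Field K] [LieRing L] [LieAlgebra K L]

/-- The centralizer `g_e = {x ∈ g : ⁅e, x⁆ = 0}` of an element `e`, as a Lie subalgebra. -/
def lieCentralizer (e : L) : LieSubalgebra K L where
  carrier := {x | ⁅e, x⁆ = 0}
  add_mem' := fun {a b} ha hb => by
    simp only [Set.mem_setOf_eq, lie_add] at *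
    rw [ha, hb, add_zero]
  zero_mem' := by simp
  smul_mem' := fun c a ha => by
    simp only [Set.mem_setOf_eq, lie_smul] at *
    rw [ha, smul_zero]
  lie_mem' := fun {a b} ha hb => by
    simp only [Set.mem_setOf_eq] at *
    rw [leibniz_lie, ha, hb, zero_lie, lie_zero, add_zero]

/-- The span of all brackets `⁅x, y⁆` with `x ∈ A`, `y ∈ B`; for `A = B` the carrier
of a Lie subalgebra this is the derived subalgebra `[A, A]`. -/
def bracketSpan (A B : Submodule K L) : Submodule K L :=
  Submodule.span K {z | ∃ x ∈ A, ∃ y ∈ B, z = ⁅x, y⁆}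

/-- The `ad h`-eigenspace `g(k) = {x ∈ g : ⁅h, x⁆ = k • x}` for an integer `k`. -/
def adEigenspace (h : L) (k : ℤ) : Submodule K L :=
  Module.End.eigenspace (LieAlgebra.ad K L h) (k : K)

end Defs


section TraceAux

open Module LinearMap Polynomial

section TracePow

variable {K V : Type*} [Field K] [CharZero K] [IsAlgClosed K]
  [AddCommGroup V] [Module K V] [FiniteDimensional K V]

lemma trace_pow_restrict_maxGenEigenspace (φ : Module.End K V) (μ : K)
    (h : ∀ m : ℕ, Set.MapsTo (φ ^ m) (φ.maxGenEigenspace μ) (φ.maxGenEigenspace μ)) (n : ℕ) :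
    trace K _ ((φ ^ n).restrict (h n)) = μ ^ n * (finrank K (φ.maxGenEigenspace μ) : K) := by
  induction n with
  | zero =>
    have : (φ ^ 0).restrict (h 0) = LinearMap.id := by
      ext x; simp [LinearMap.restrict_apply]
    rw [this]
    simp [LinearMap.trace_id]
  | succ n ih =>
    have hφ : Set.MapsTo φ (φ.maxGenEigenspace μ) (φ.maxGenEigenspace μ) :=
      φ.mapsTo_maxGenEigenspace_of_comm rfl μ
    have key : (φ ^ (n+1)).restrict (h (n+1)) =
        ((φ ^ n).restrict (h n)) ∘ₗ (φ.restrict hφ) := by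
      ext x
      simp [LinearMap.restrict_apply, pow_succ, Module.End.mul_apply]
      rfl
    have hcomm : Commute ((φ ^ n).restrict (h n)) (φ.restrict hφ) :=
      LinearMap.restrict_commute ((Commute.refl φ).pow_left n) _ _
    have hnil : IsNilpotent (φ.restrict hφ - algebraMap K _ μ) :=
      φ.isNilpotent_restrict_maxGenEigenspace_sub_algebraMap μ
    rw [key, LinearMap.trace_comp_eq_mul_of_commute_of_isNilpotent μ hcomm hnil, ih]
    ring

lemma isNilpotent_of_trace_pow_eq_zero (φ : Module.End K V)
    (H : ∀ k : ℕ, trace K V (φ ^ (k+1)) = 0) : IsNilpotent φ := by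
  classical
  have hind := φ.independent_maxGenEigenspace
  have hsup := Module.End.iSup_maxGenEigenspace_eq_top φ
  have hds := DirectSum.isInternal_submodule_of_iSupIndep_of_iSup_eq_top hind hsup
  have h_fin : {μ : K | φ.maxGenEigenspace μ ≠ ⊥}.Finite :=
    WellFoundedGT.finite_ne_bot_of_iSupIndep hind
  have hmt : ∀ (m : ℕ) (μ : K),
      Set.MapsTo (φ ^ m) (φ.maxGenEigenspace μ) (φ.maxGenEigenspace μ) :=
    fun m μ => φ.mapsTo_maxGenEigenspace_of_comm ((Commute.refl φ).pow_right m) μ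
  set s := h_fin.toFinset with hs
  have key : ∀ k : ℕ,
      ∑ μ ∈ s, μ ^ (k+1) * (finrank K (φ.maxGenEigenspace μ) : K) = 0 := by
    intro k
    have h1 := LinearMap.trace_eq_sum_trace_restrict' hds h_fin
      (fun μ => hmt (k+1) μ)
    rw [H k] at h1
    calc ∑ μ ∈ s, μ ^ (k+1) * (finrank K (φ.maxGenEigenspace μ) : K)
        = ∑ μ ∈ s, trace K _ ((φ ^ (k+1)).restrict (hmt (k+1) μ)) :=
          Finset.sum_congr rfl fun μ _ =>
            (trace_pow_restrict_maxGenEigenspace φ μ (fun m => hmt m μ) (k+1)).symm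
      _ = 0 := h1.symm
  have hzero : ∀ μ : K, μ ≠ 0 → φ.maxGenEigenspace μ = ⊥ := by
    intro μ hμ
    by_contra hne
    have hμs : μ ∈ s := by simp [hs, hne]
    set t : Finset K := insert 0 s with ht
    set q : K[X] := Lagrange.interpolate t _root_.id (fun x => if x = μ then 1 else 0) with hqdef
    have hinj : Set.InjOn id (t : Set K) := Set.injOn_id _
    have hq0 : q.eval 0 = 0 := by
      have h := Lagrange.eval_interpolate_at_node (v := _root_.id)
        (r := fun x => if x = μ then 1 else 0) hinj (Finset.mem_insert_self 0 s)
      simp only [id_eq] at h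
      rw [hqdef, h, if_neg (Ne.symm hμ)]
    have hqμ : q.eval μ = 1 := by
      have h := Lagrange.eval_interpolate_at_node (v := _root_.id)
        (r := fun x => if x = μ then 1 else 0) hinj (Finset.mem_insert_of_mem hμs)
      simp only [id_eq] at h
      rw [hqdef, h]
      simp
    have hswap : ∑ ν ∈ s, (finrank K (φ.maxGenEigenspace ν) : K) * q.eval ν = 0 := by
      have heval : ∀ ν : K, q.eval ν =
          ∑ j ∈ Finset.range (q.natDegree + 1), q.coeff j * ν ^ j := fun ν => by
        rw [Polynomial.eval_eq_sum_range]
      simp_rw [heval, Finset.mul_sum]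
      rw [Finset.sum_comm]
      refine Finset.sum_eq_zero fun j _ => ?_
      rcases j with _ | i
      · have : q.coeff 0 = 0 := by rw [Polynomial.coeff_zero_eq_eval_zero, hq0]
        simp [this]
      · have := key i
        calc ∑ ν ∈ s, (finrank K (φ.maxGenEigenspace ν) : K) * (q.coeff (i+1) * ν ^ (i+1))
            = q.coeff (i+1) * ∑ ν ∈ s, ν ^ (i+1) * (finrank K (φ.maxGenEigenspace ν) : K) := by
              rw [Finset.mul_sum]; exact Finset.sum_congr rfl fun ν _ => by ring
          _ = 0 := by rw [this, mul_zero]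
    have hone : ∑ ν ∈ s, (finrank K (φ.maxGenEigenspace ν) : K) * q.eval ν =
        (finrank K (φ.maxGenEigenspace μ) : K) := by
      rw [Finset.sum_eq_single μ]
      · rw [hqμ, mul_one]
      · intro ν hν hνμ
        have hq : q.eval ν = 0 := by
          have h := Lagrange.eval_interpolate_at_node (v := _root_.id)
            (r := fun x => if x = μ then 1 else 0) hinj (Finset.mem_insert_of_mem hν)
          simp only [id_eq] at h
          rw [hqdef, h, if_neg hνμ]
        rw [hq, mul_zero]
      · intro h; exact absurd hμs h
    have hd0 : (finrank K (φ.maxGenEigenspace μ) : K) = 0 := by rw [← hone, hswap]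
    have hd0' : finrank K (φ.maxGenEigenspace μ) = 0 := Nat.cast_eq_zero.mp hd0
    have : Nontrivial (φ.maxGenEigenspace μ) := Submodule.nontrivial_iff_ne_bot.mpr hne
    have := Module.finrank_pos (R := K) (M := φ.maxGenEigenspace μ)
    omega
  have htop : φ.maxGenEigenspace 0 = ⊤ := by
    refine le_antisymm le_top ?_
    rw [← hsup]
    refine iSup_le fun μ => ?_
    rcases eq_or_ne μ 0 with rfl | h
    · exact le_rfl
    · rw [hzero μ h]; exact bot_le
  rw [LinearMap.isNilpotent_iff_charpoly, LinearMap.charpoly_eq_X_pow_iff]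
  intro m
  have hm : m ∈ φ.maxGenEigenspace 0 := htop ▸ Submodule.mem_top
  rw [Module.End.mem_maxGenEigenspace] at hm
  obtain ⟨n, hn⟩ := hm
  exact ⟨n, by simpa using hn⟩

end TracePow

end TraceAux

attribute [local instance] LieRing.ofAssociativeRing

/-- If `g` is a finite-dimensional semisimple Lie algebra over an algebraically closed field of
characteristic 0 and `e ∈ ⁅g_e, g_e⁆`, then `e` is nilpotent (`ad e` is nilpotent). -/
theorem stmt0 (K L : Type*) [Field K] [IsAlgClosed K] [CharZero K]
    [LieRing L] [LieAlgebra K L] [FiniteDimensional K L] [LieAlgebra.IsSemisimple K L]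
    (e : L)
    (hreach : e ∈ bracketSpan K L (lieCentralizer K L e).toSubmodule
        (lieCentralizer K L e).toSubmodule) :
    IsNilpotent (LieAlgebra.ad K L e) := by
  set ad := LieAlgebra.ad K L with had
  have hcomm : ∀ x ∈ (lieCentralizer K L e).toSubmodule, Commute (ad e) (ad x) := by
    intro x hx
    have hx' : ⁅e, x⁆ = 0 := hx
    have h2 : ad ⁅e, x⁆ = ⁅ad e, ad x⁆ := LieHom.map_lie _ e x
    rw [hx', map_zero, Ring.lie_def] at h2
    exact sub_eq_zero.mp h2.symm
  have key : ∀ m : ℕ, ∀ z ∈ bracketSpan K L (lieCentralizer K L e).toSubmodule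
      (lieCentralizer K L e).toSubmodule,
      LinearMap.trace K L ((ad e ^ m) * ad z) = 0 := by
    intro m z hz
    induction hz using Submodule.span_induction with
    | mem z hz =>
      obtain ⟨x, hx, y, hy, rfl⟩ := hz
      have hpx : Commute (ad e ^ m) (ad x) := ((hcomm x hx).pow_left m)
      have hpy : Commute (ad e ^ m) (ad y) := ((hcomm y hy).pow_left m)
      have hb : ad ⁅x, y⁆ = ad x * ad y - ad y * ad x := by
        rw [had, LieHom.map_lie, Ring.lie_def]
      rw [hb, mul_sub, map_sub]
      have h1 : LinearMap.trace K L (ad e ^ m * (ad x * ad y)) =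
          LinearMap.trace K L (ad e ^ m * (ad y * ad x)) := by
        calc LinearMap.trace K L (ad e ^ m * (ad x * ad y))
            = LinearMap.trace K L (ad x * (ad e ^ m * ad y)) := by
              rw [← mul_assoc, ← mul_assoc, hpx.eq]
          _ = LinearMap.trace K L ((ad e ^ m * ad y) * ad x) :=
              LinearMap.trace_mul_comm K _ _
          _ = LinearMap.trace K L (ad e ^ m * (ad y * ad x)) := by rw [mul_assoc]
      rw [h1, sub_self]
    | zero => simp
    | add u v hu hv ihu ihv => rw [map_add, mul_add, map_add, ihu, ihv, add_zero]
    | smul c u hu ihu => rw [map_smul, mul_smul_comm, map_smul, ihu, smul_zero]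
  have H : ∀ k : ℕ, LinearMap.trace K L (ad e ^ (k+1)) = 0 := by
    intro k
    have := key k e hreach
    rwa [← pow_succ] at this
  exact isNilpotent_of_trace_pow_eq_zero (ad e) H
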